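/- arXiv:1704.03190 — 2 statements merged into one kernel-verified Lean document; each statement's English description precedes it below -/
import Mathlib

section
/- Main theorem (finite-time attitude synchronization): let G be a connected undirected graph on n nodes with m edges and incidence matrix B, B̂ = B ⊗ I₃. Suppose x : [0, ∞) → ℝ^{3n} is locally Lipschitz, Σ_{i=1}^{n} ‖xᵢ(0)‖₂² < π², and for almost every t ≥ 0 the derivative x′(t) exists and x′(t) = −L_{x(t)} B̂ s(t) for some sign-selection s(t) ∈ ℝ^{3m} for B̂ᵀ x(t). Then ‖xᵢ(t)‖₂ < π for all i and all t ≥ 0, and there exists a finite time t* ≥ 0 such that for all t ≥ t*, x₁(t) = x₂(t) = ⋯ = xₙ(t), i.e., consensus is reached in finite time. -/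
open Matrix Real

noncomputable section

set_option maxHeartbeats 1000000

/-- The skew-symmetric "hat" matrix of a vector in ℝ³. -/
def hatm (p : Fin 3 → ℝ) : Matrix (Fin 3) (Fin 3) ℝ :=
  !![0, -p 2, p 1; p 2, 0, -p 0; -p 1, p 0, 0]

/-- The Euclidean (ℓ²) norm on ℝ³. -/
def norm2 (p : Fin 3 → ℝ) : ℝ := Real.sqrt (∑ i, p i ^ 2)

/-- The unnormalized sinc function: α · sinc α = sin α, sinc 0 = 1. -/
def sinc (α : ℝ) : ℝ := if α = 0 then 1 else Real.sin α / α

/-- c(θ) = sinc(θ)/sinc²(θ/2). -/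
def cfun (θ : ℝ) : ℝ := _root_.sinc θ / _root_.sinc (θ / 2) ^ 2

/-- The symmetric part L¹ₓ of the transition matrix (L¹₀ := I₃). -/
def L1mat (x : Fin 3 → ℝ) : Matrix (Fin 3) (Fin 3) ℝ :=
  if x = 0 then 1 else
    cfun (norm2 x) • (1 : Matrix (Fin 3) (Fin 3) ℝ)
      + ((1 - cfun (norm2 x)) / norm2 x ^ 2) • vecMulVec x x

/-- The transition matrix Lₓ of the axis-angle kinematics (L₀ := I₃). -/
def Lmat (x : Fin 3 → ℝ) : Matrix (Fin 3) (Fin 3) ℝ :=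
  if x = 0 then 1 else
    cfun (norm2 x) • (1 : Matrix (Fin 3) (Fin 3) ℝ)
      + ((1 - cfun (norm2 x)) / norm2 x ^ 2) • vecMulVec x x
      + (1 / 2 : ℝ) • hatm x

/-- `s` is a sign-selection for `z`: each component lies in [−1,1] and equals
`sign (z ℓ)` whenever `z ℓ ≠ 0`. -/
def SignSel {k : Type*} (s z : k → ℝ) : Prop :=
  ∀ ℓ, s ℓ ∈ Set.Icc (-1 : ℝ) 1 ∧ (z ℓ ≠ 0 → s ℓ = Real.sign (z ℓ))

/-- Vector-valued (ℝ³-blocks) sign-selection, componentwise. -/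
def SignSelV {m : ℕ} (s z : Fin m → Fin 3 → ℝ) : Prop :=
  ∀ e k, s e k ∈ Set.Icc (-1 : ℝ) 1 ∧ (z e k ≠ 0 → s e k = Real.sign (z e k))

open MeasureTheory Filter Set Topology intervalIntegral


lemma tendsto_quot {f : ℝ → ℝ} {d t : ℝ} (h : HasDerivAt f d t) :
    Tendsto (fun n : ℕ => ((n:ℝ)+1) * (f (t + 1/((n:ℝ)+1)) - f t)) atTop (𝓝 d) := by
  have hs := hasDerivAt_iff_tendsto_slope.mp h
  have hpos : ∀ n : ℕ, (0:ℝ) < 1/((n:ℝ)+1) := fun n => by positivity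
  have htend : Tendsto (fun n : ℕ => t + 1/((n:ℝ)+1)) atTop (𝓝[≠] t) := by
    apply tendsto_nhdsWithin_of_tendsto_nhds_of_eventually_within
    · have h1 : Tendsto (fun n : ℕ => 1/((n:ℝ)+1)) atTop (𝓝 0) :=
        tendsto_one_div_add_atTop_nhds_zero_nat
      simpa using tendsto_const_nhds.add h1
    · exact Eventually.of_forall fun n => by
        simp only [mem_compl_iff, mem_singleton_iff]
        intro hc
        nlinarith [hpos n, congrArg (fun u => u - t) hc]
  have hcomp := hs.comp htend
  refine hcomp.congr fun n => ?_
  have hne : (1/((n:ℝ)+1)) ≠ 0 := ne_of_gt (hpos n)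
  simp only [Function.comp, slope_def_field]
  rw [show t + 1/((n:ℝ)+1) - t = 1/((n:ℝ)+1) by ring]
  field_simp

lemma abs_deriv_le_of_lip {f : ℝ → ℝ} {K d t : ℝ}
    (hK : ∀ s u, |f s - f u| ≤ K * |s - u|) (h : HasDerivAt f d t) : |d| ≤ K := by
  have := (tendsto_quot h).abs
  refine le_of_tendsto this (Eventually.of_forall fun n => ?_)
  have hpos : (0:ℝ) < 1/((n:ℝ)+1) := by positivity
  have h1 : |((n:ℝ)+1) * (f (t + 1/((n:ℝ)+1)) - f t)| 
      = ((n:ℝ)+1) * |f (t + 1/((n:ℝ)+1)) - f t| := by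
    rw [abs_mul, abs_of_pos (by positivity)]
  rw [h1]
  have h2 := hK (t + 1/((n:ℝ)+1)) t
  have h3 : |t + 1/((n:ℝ)+1) - t| = 1/((n:ℝ)+1) := by
    rw [show t + 1/((n:ℝ)+1) - t = 1/((n:ℝ)+1) by ring, abs_of_pos hpos]
  rw [h3] at h2
  calc ((n:ℝ)+1) * |f (t + 1/((n:ℝ)+1)) - f t| ≤ ((n:ℝ)+1) * (K * (1/((n:ℝ)+1))) := by
        apply mul_le_mul_of_nonneg_left h2 (by positivity)
    _ = K := by field_simp

lemma key_ftc {f : ℝ → ℝ} {K a b c : ℝ} (hK0 : 0 ≤ K)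
    (hK : ∀ s u, |f s - f u| ≤ K * |s - u|) (hab : a ≤ b)
    (hd : ∀ᵐ t ∂(volume : Measure ℝ), t ∈ Set.Ioo a b → ∃ d, HasDerivAt f d t ∧ d ≤ c) :
    f b - f a ≤ c * (b - a) := by
  -- f is Lipschitz, hence continuous
  have hlip : LipschitzWith (Real.toNNReal K) f := by
    apply LipschitzWith.of_dist_le_mul
    intro s u
    rw [Real.dist_eq, Real.dist_eq]
    calc |f s - f u| ≤ K * |s - u| := hK s u
      _ ≤ (Real.toNNReal K : ℝ) * |s - u| :=
        mul_le_mul_of_nonneg_right (Real.le_coe_toNNReal K) (abs_nonneg _)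
  have hcont : Continuous f := hlip.continuous
  set G : ℝ → ℝ := fun u => ∫ s in a..u, f s with hGdef
  have hint : ∀ p q : ℝ, IntervalIntegrable f volume p q := fun p q =>
    hcont.intervalIntegrable p q
  have hG : ∀ u : ℝ, HasDerivAt G (f u) u := by
    intro u
    exact integral_hasDerivAt_right (hint a u)
      hcont.stronglyMeasurable.stronglyMeasurableAtFilter hcont.continuousAt
  set F : ℕ → ℝ → ℝ := fun n s => ((n:ℝ)+1) * (f (s + 1/((n:ℝ)+1)) - f s) with hFdef
  -- Step 1 : the integral of F n over [a,b] tends to f b - f a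
  have hFint : ∀ n : ℕ, ∫ s in a..b, F n s
      = ((n:ℝ)+1) * ((G (b + 1/((n:ℝ)+1)) - G b) - (G (a + 1/((n:ℝ)+1)) - G a)) := by
    intro n
    set h : ℝ := 1/((n:ℝ)+1) with hh
    have hintsh : IntervalIntegrable (fun s => f (s + h)) volume a b := by
      have : Continuous fun s : ℝ => f (s + h) := hcont.comp (continuous_add_right h)
      exact this.intervalIntegrable a b
    have e1 : ∫ s in a..b, F n s = ((n:ℝ)+1) * ∫ s in a..b, (f (s + h) - f s) := by
      rw [← intervalIntegral.integral_const_mul]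
    have e2 : ∫ s in a..b, (f (s + h) - f s) = (∫ s in a..b, f (s + h)) - ∫ s in a..b, f s :=
      intervalIntegral.integral_sub hintsh (hint a b)
    have e3 : ∫ s in a..b, f (s + h) = ∫ s in (a+h)..(b+h), f s :=
      intervalIntegral.integral_comp_add_right f h
    have e4 : ∫ s in (a+h)..(b+h), f s = G (b+h) - G (a+h) := by
      have hadd := intervalIntegral.integral_add_adjacent_intervals (hint a (a+h)) (hint (a+h) (b+h))
      have : G (a + h) + ∫ s in (a+h)..(b+h), f s = G (b + h) := hadd
      linarith
    have hGa : G a = 0 := intervalIntegral.integral_same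
    rw [e1, e2, e3, e4]
    have : ∫ s in a..b, f s = G b := rfl
    rw [this, hGa]; ring
  have hstep1 : Tendsto (fun n => ∫ s in a..b, F n s) atTop (𝓝 (f b - f a)) := by
    have hqb : Tendsto (fun n : ℕ => ((n:ℝ)+1) * (G (b + 1/((n:ℝ)+1)) - G b)) atTop (𝓝 (f b)) :=
      tendsto_quot (hG b)
    have hqa : Tendsto (fun n : ℕ => ((n:ℝ)+1) * (G (a + 1/((n:ℝ)+1)) - G a)) atTop (𝓝 (f a)) :=
      tendsto_quot (hG a)
    have := hqb.sub hqa
    refine this.congr fun n => ?_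
    rw [hFint n]; ring
  -- Step 2 : the integral of F n tends to the integral of deriv f
  have hFbd : ∀ n s, |F n s| ≤ K := by
    intro n s
    have hpos : (0:ℝ) < 1/((n:ℝ)+1) := by positivity
    have h2 := hK (s + 1/((n:ℝ)+1)) s
    rw [show s + 1/((n:ℝ)+1) - s = 1/((n:ℝ)+1) by ring, abs_of_pos hpos] at h2
    have : |F n s| = ((n:ℝ)+1) * |f (s + 1/((n:ℝ)+1)) - f s| := by
      rw [hFdef]; rw [abs_mul, abs_of_pos (by positivity)]
    rw [this]
    calc ((n:ℝ)+1) * |f (s + 1/((n:ℝ)+1)) - f s| ≤ ((n:ℝ)+1) * (K * (1/((n:ℝ)+1))) :=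
        mul_le_mul_of_nonneg_left h2 (by positivity)
      _ = K := by field_simp
  have hbne : ∀ᵐ s : ℝ ∂volume, s ≠ b := by
    have : (volume : Measure ℝ) {b} = 0 := measure_singleton b
    exact (MeasureTheory.measure_eq_zero_iff_ae_notMem).mp this
  have hlim : ∀ᵐ s ∂(volume.restrict (Ioc a b)),
      Tendsto (fun n => F n s) atTop (𝓝 (deriv f s)) := by
    rw [ae_restrict_iff' measurableSet_Ioc]
    filter_upwards [hd, hbne] with s hs hsb hmem
    have hs' : s ∈ Set.Ioo a b := ⟨hmem.1, lt_of_le_of_ne hmem.2 hsb⟩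
    obtain ⟨d, hdd, -⟩ := hs hs'
    have := tendsto_quot hdd
    rwa [hdd.deriv] at *
  have hstep2 : Tendsto (fun n => ∫ s in a..b, F n s) atTop
      (𝓝 (∫ s in Ioc a b, deriv f s)) := by
    have hconv : ∀ n : ℕ, ∫ s in a..b, F n s = ∫ s in Ioc a b, F n s := fun n =>
      intervalIntegral.integral_of_le hab
    have hdct := MeasureTheory.tendsto_integral_of_dominated_convergence
      (F := F) (f := fun s => deriv f s) (μ := volume.restrict (Ioc a b))
      (fun _ => K)
      (fun n => (Continuous.aestronglyMeasurable (by
        exact ((continuous_const.mul ((hcont.comp (continuous_add_right _)).sub hcont))))))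
      (integrable_const K)
      (fun n => Eventually.of_forall fun s => by
        rw [Real.norm_eq_abs]; exact hFbd n s)
      hlim
    refine Tendsto.congr (fun n => (hconv n).symm) hdct
  have heq : f b - f a = ∫ s in Ioc a b, deriv f s := tendsto_nhds_unique hstep1 hstep2
  -- Step 3 : bound the integral
  have hderbd : ∀ s, |deriv f s| ≤ K := by
    intro s
    by_cases hdiff : DifferentiableAt ℝ f s
    · exact abs_deriv_le_of_lip hK hdiff.hasDerivAt
    · rw [deriv_zero_of_not_differentiableAt hdiff, abs_zero]; exact hK0
  have hderint : Integrable (fun s => deriv f s) (volume.restrict (Ioc a b)) := by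
    refine Integrable.mono' (integrable_const K) ((measurable_deriv f).aestronglyMeasurable) ?_
    exact Eventually.of_forall fun s => by rw [Real.norm_eq_abs]; exact hderbd s
  have hbound : ∫ s in Ioc a b, deriv f s ≤ ∫ _s in Ioc a b, c := by
    refine integral_mono_ae hderint (integrable_const c) ?_
    rw [EventuallyLE, ae_restrict_iff' measurableSet_Ioc]
    filter_upwards [hd, hbne] with s hs hsb hmem
    have hs' : s ∈ Set.Ioo a b := ⟨hmem.1, lt_of_le_of_ne hmem.2 hsb⟩
    obtain ⟨d, hdd, hdc⟩ := hs hs'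
    rw [hdd.deriv]; exact hdc
  have hconst : ∫ _s in Ioc a b, c = c * (b - a) := by
    rw [setIntegral_const, Real.volume_real_Ioc_of_le hab]
    rw [smul_eq_mul]; ring
  rw [heq]
  rw [hconst] at hbound
  exact hbound



lemma countable_nonacc (Z : Set ℝ) : {x | x ∈ Z ∧ ¬ AccPt x (𝓟 Z)}.Countable := by
  have hsub : {x | x ∈ Z ∧ ¬ AccPt x (𝓟 Z)} ⊆
      ⋃ (p : ℚ) (q : ℚ), {x : ℝ | x ∈ Z ∧ (↑p < x ∧ x < ↑q) ∧ Ioo (p:ℝ) (q:ℝ) ∩ Z ⊆ {x}} := by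
    rintro x ⟨hxZ, hnacc⟩
    rw [accPt_iff_nhds] at hnacc
    push_neg at hnacc
    obtain ⟨U, hU, hUx⟩ := hnacc
    obtain ⟨ε, hε, hball⟩ := Metric.mem_nhds_iff.mp hU
    obtain ⟨p, hp1, hp2⟩ := exists_rat_btwn (show x - ε < x by linarith)
    obtain ⟨q, hq1, hq2⟩ := exists_rat_btwn (show x < x + ε by linarith)
    refine mem_iUnion.2 ⟨p, mem_iUnion.2 ⟨q, ⟨hxZ, ⟨hp2, hq1⟩, ?_⟩⟩⟩
    rintro y ⟨hy1, hy2⟩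
    have hyU : y ∈ U := by
      apply hball
      rw [Metric.mem_ball, Real.dist_eq, abs_lt]
      constructor <;> [nlinarith [hy1.1, hy1.2]; nlinarith [hy1.1, hy1.2]]
    have := hUx y ⟨hyU, hy2⟩
    simpa using this
  apply Set.Countable.mono hsub
  apply Set.countable_iUnion; intro p
  apply Set.countable_iUnion; intro q
  apply Set.Subsingleton.countable
  rintro y ⟨hy, hy2, hy3⟩ y' ⟨hy', hy2', hy3'⟩
  have h1 : y' ∈ ({y} : Set ℝ) := hy3 ⟨hy2', hy'⟩
  have h2 : y ∈ ({y'} : Set ℝ) := hy3' ⟨hy2, hy⟩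
  simpa using h2

lemma deriv_eq_zero_of_acc {g : ℝ → ℝ} {d t : ℝ} {Z : Set ℝ}
    (hZ : ∀ u ∈ Z, g u = 0) (ht : t ∈ Z) (hacc : AccPt t (𝓟 Z)) (hg : HasDerivAt g d t) :
    d = 0 := by
  have hs := hasDerivAt_iff_tendsto_slope.mp hg
  have hfilt : 𝓝[Z \ {t}] t = 𝓝[≠] t ⊓ 𝓟 Z := by
    rw [show Z \ {t} = {t}ᶜ ∩ Z from by rw [Set.inter_comm, ← Set.diff_eq], nhdsWithin_inter']
  have hne : (𝓝[Z \ {t}] t).NeBot := by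
    rw [hfilt]; exact hacc
  have h1 : Tendsto (slope g t) (𝓝[Z \ {t}] t) (𝓝 d) :=
    hs.mono_left (nhdsWithin_mono t (by intro u hu; exact hu.2))
  have h2 : Tendsto (slope g t) (𝓝[Z \ {t}] t) (𝓝 0) := by
    have : ∀ u ∈ Z \ {t}, slope g t u = 0 := by
      intro u hu
      rw [slope_def_field, hZ u hu.1, hZ t ht]
      simp
    refine Tendsto.congr' ?_ tendsto_const_nhds
    filter_upwards [self_mem_nhdsWithin] with u hu
    exact (this u hu).symm
  exact tendsto_nhds_unique h1 h2

lemma rsign_mul_self (a : ℝ) : Real.sign a * a = |a| := by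
  rcases lt_trichotomy a 0 with h | h | h
  · rw [Real.sign_of_neg h, abs_of_neg h]; ring
  · simp [h]
  · rw [Real.sign_of_pos h, abs_of_pos h]; ring

lemma hasDerivAt_abs_comp {g : ℝ → ℝ} {d t : ℝ} (hg : HasDerivAt g d t)
    (h : g t ≠ 0 ∨ d = 0) : HasDerivAt (fun u => |g u|) (Real.sign (g t) * d) t := by
  rcases lt_trichotomy (g t) 0 with hlt | heq | hgt
  · have hev : (fun u => |g u|) =ᶠ[𝓝 t] (fun u => -g u) := by
      have : ∀ᶠ u in 𝓝 t, g u < 0 := hg.continuousAt.eventually_lt continuousAt_const hlt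
      filter_upwards [this] with u hu
      rw [abs_of_neg hu]
    rw [Real.sign_of_neg hlt]
    have := hg.neg
    rw [show -1 * d = -d by ring]
    exact (Filter.EventuallyEq.hasDerivAt_iff hev).mpr this
  · have hd0 : d = 0 := by
      rcases h with h | h
      · exact absurd heq h
      · exact h
    subst hd0
    rw [heq, Real.sign_zero, zero_mul]
    rw [hasDerivAt_iff_isLittleO] at hg ⊢
    simp only [heq, sub_zero, smul_zero, zero_smul] at hg ⊢
    have := hg.norm_left
    refine (Asymptotics.isLittleO_iff.2 fun ε hε => ?_)
    have h2 := Asymptotics.isLittleO_iff.1 this hε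
    filter_upwards [h2] with u hu
    simpa [abs_abs] using hu
  · have hev : (fun u => |g u|) =ᶠ[𝓝 t] g := by
      have : ∀ᶠ u in 𝓝 t, 0 < g u := continuousAt_const.eventually_lt hg.continuousAt hgt
      filter_upwards [this] with u hu
      rw [abs_of_pos hu]
    rw [Real.sign_of_pos hgt, one_mul]
    exact (Filter.EventuallyEq.hasDerivAt_iff hev).mpr hg

lemma sum2_lip {α β : Type*} [Fintype α] [Fintype β] (f g : α → β → ℝ) (C : α → β → ℝ)
    (h : ∀ a b, |f a b - g a b| ≤ C a b) :
    |(∑ a, ∑ b, f a b) - ∑ a, ∑ b, g a b| ≤ ∑ a, ∑ b, C a b := by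
  rw [← Finset.sum_sub_distrib]
  refine (Finset.abs_sum_le_sum_abs _ _).trans (Finset.sum_le_sum fun a _ => ?_)
  rw [← Finset.sum_sub_distrib]
  exact (Finset.abs_sum_le_sum_abs _ _).trans (Finset.sum_le_sum fun b _ => h a b)

open scoped NNReal

lemma cfun_bounds {θ : ℝ} (h0 : 0 ≤ θ) (hπ : θ < Real.pi) :
    Real.cos (θ/2) ≤ cfun θ ∧ cfun θ ≤ 1 := by
  rcases eq_or_lt_of_le h0 with h | hθ
  · rw [← h]
    norm_num [cfun, _root_.sinc]
  · have hu0 : 0 < θ/2 := by linarith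
    have huπ : θ/2 < Real.pi/2 := by linarith
    have hsinu : 0 < Real.sin (θ/2) := Real.sin_pos_of_pos_of_lt_pi hu0 (by linarith [Real.pi_pos])
    have hcosu : 0 < Real.cos (θ/2) := Real.cos_pos_of_mem_Ioo ⟨by linarith, huπ⟩
    have hformula : cfun θ = (θ/2) * Real.cos (θ/2) / Real.sin (θ/2) := by
      rw [cfun, _root_.sinc, _root_.sinc, if_neg (ne_of_gt hθ), if_neg (ne_of_gt hu0)]
      rw [show Real.sin θ = 2 * Real.sin (θ/2) * Real.cos (θ/2) by
        rw [show θ = 2*(θ/2) by ring, Real.sin_two_mul]; ring_nf]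
      field_simp
    constructor
    · rw [hformula, le_div_iff₀ hsinu]
      have hsle : Real.sin (θ/2) ≤ θ/2 := Real.sin_le (le_of_lt hu0)
      nlinarith
    · rw [hformula, div_le_one hsinu]
      have htan := Real.lt_tan hu0 huπ
      rw [Real.tan_eq_sin_div_cos, lt_div_iff₀ hcosu] at htan
      nlinarith

lemma norm2_nonneg (p : Fin 3 → ℝ) : 0 ≤ norm2 p := Real.sqrt_nonneg _

lemma norm2_sq (p : Fin 3 → ℝ) : norm2 p ^ 2 = p 0^2 + p 1^2 + p 2^2 := by
  rw [norm2, Real.sq_sqrt (by positivity), Fin.sum_univ_three]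

lemma norm2_sq_pos {p : Fin 3 → ℝ} (hp : p ≠ 0) : 0 < norm2 p ^ 2 := by
  have : ∃ k, p k ≠ 0 := by
    by_contra hc
    push_neg at hc
    exact hp (funext fun k => hc k)
  obtain ⟨k, hk⟩ := this
  rw [norm2, Real.sq_sqrt (by positivity)]
  exact Finset.sum_pos' (fun i _ => sq_nonneg _) ⟨k, Finset.mem_univ k, by positivity⟩

lemma hatm_apply (p : Fin 3 → ℝ) :
    hatm p 0 0 = 0 ∧ hatm p 0 1 = -p 2 ∧ hatm p 0 2 = p 1 ∧
    hatm p 1 0 = p 2 ∧ hatm p 1 1 = 0 ∧ hatm p 1 2 = -p 0 ∧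
    hatm p 2 0 = -p 1 ∧ hatm p 2 1 = p 0 ∧ hatm p 2 2 = 0 := by
  refine ⟨rfl, rfl, rfl, rfl, rfl, rfl, rfl, rfl, rfl⟩

lemma mulVec3 (M : Matrix (Fin 3) (Fin 3) ℝ) (v : Fin 3 → ℝ) (k : Fin 3) :
    M.mulVec v k = M k 0 * v 0 + M k 1 * v 1 + M k 2 * v 2 := by
  simp [Matrix.mulVec, dotProduct, Fin.sum_univ_three]

lemma Lmat_apply {x : Fin 3 → ℝ} (hx : x ≠ 0) (k j : Fin 3) :
    Lmat x k j = cfun (norm2 x) * (if k = j then 1 else 0)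
      + ((1 - cfun (norm2 x)) / norm2 x ^ 2) * (x k * x j) + (1/2) * hatm x k j := by
  rw [Lmat, if_neg hx]
  simp [Matrix.add_apply, Matrix.smul_apply, Matrix.one_apply, Matrix.vecMulVec_apply,
    smul_eq_mul]

lemma dot_Lmat (x v : Fin 3 → ℝ) :
    ∑ k, x k * (Lmat x).mulVec v k = ∑ k, x k * v k := by
  by_cases hx : x = 0
  · subst hx; simp [Lmat]
  · have hq := norm2_sq_pos hx
    set c := cfun (norm2 x) with hc
    set a := (1 - c) / norm2 x ^ 2 with ha
    have hrel : a * (x 0 ^ 2 + x 1 ^ 2 + x 2 ^ 2) = 1 - c := by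
      rw [ha, ← norm2_sq, div_mul_cancel₀]
      exact ne_of_gt hq
    obtain ⟨h00, h01, h02, h10, h11, h12, h20, h21, h22⟩ := hatm_apply x
    rw [Fin.sum_univ_three, Fin.sum_univ_three, mulVec3, mulVec3, mulVec3]
    rw [Lmat_apply hx 0 0, Lmat_apply hx 0 1, Lmat_apply hx 0 2, Lmat_apply hx 1 0,
      Lmat_apply hx 1 1, Lmat_apply hx 1 2, Lmat_apply hx 2 0, Lmat_apply hx 2 1,
      Lmat_apply hx 2 2, h00, h01, h02, h10, h11, h12, h20, h21, h22]
    simp only [Fin.reduceEq, reduceIte]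
    norm_num
    linear_combination (x 0 * v 0 + x 1 * v 1 + x 2 * v 2) * hrel

lemma quad_Lmat {x : Fin 3 → ℝ} (hx : x ≠ 0) (v : Fin 3 → ℝ) :
    ∑ k, v k * (Lmat x).mulVec v k
      = cfun (norm2 x) * ∑ k, v k^2
        + ((1 - cfun (norm2 x)) / norm2 x ^ 2) * (∑ k, x k * v k)^2 := by
  have hq := norm2_sq_pos hx
  set c := cfun (norm2 x) with hc
  set a := (1 - c) / norm2 x ^ 2 with ha
  obtain ⟨h00, h01, h02, h10, h11, h12, h20, h21, h22⟩ := hatm_apply x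
  rw [Fin.sum_univ_three, Fin.sum_univ_three, Fin.sum_univ_three, mulVec3, mulVec3, mulVec3]
  rw [Lmat_apply hx 0 0, Lmat_apply hx 0 1, Lmat_apply hx 0 2, Lmat_apply hx 1 0,
    Lmat_apply hx 1 1, Lmat_apply hx 1 2, Lmat_apply hx 2 0, Lmat_apply hx 2 1,
    Lmat_apply hx 2 2, h00, h01, h02, h10, h11, h12, h20, h21, h22]
  simp only [Fin.reduceEq, reduceIte]
  norm_num
  ring

lemma quad_lower {x : Fin 3 → ℝ} {ρ : ℝ} (hx : norm2 x ≤ ρ) (hρπ : ρ < Real.pi)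
    (v : Fin 3 → ℝ) :
    Real.cos (ρ/2) * ∑ k, v k^2 ≤ ∑ k, v k * (Lmat x).mulVec v k := by
  have hρ0 : 0 ≤ ρ := le_trans (norm2_nonneg x) hx
  have hS : 0 ≤ ∑ k, v k^2 := Finset.sum_nonneg fun k _ => sq_nonneg _
  have hμ1 : Real.cos (ρ/2) ≤ 1 := Real.cos_le_one _
  by_cases hx0 : x = 0
  · subst hx0
    have hL : Lmat 0 = 1 := by simp [Lmat]
    rw [hL, Matrix.one_mulVec]
    have h2 : ∑ k, v k * v k = ∑ k, v k ^2 :=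
      Finset.sum_congr rfl fun k _ => by ring
    rw [h2]
    nlinarith
  · have hθ0 : 0 ≤ norm2 x := norm2_nonneg x
    have hθπ : norm2 x < Real.pi := lt_of_le_of_lt hx hρπ
    obtain ⟨hc1, hc2⟩ := cfun_bounds hθ0 hθπ
    have hmono : Real.cos (ρ/2) ≤ Real.cos (norm2 x/2) := by
      apply Real.cos_le_cos_of_nonneg_of_le_pi (by linarith) (by linarith [Real.pi_pos]) (by linarith)
    have hq := norm2_sq_pos hx0
    rw [quad_Lmat hx0 v]
    have ha : 0 ≤ (1 - cfun (norm2 x)) / norm2 x ^ 2 := by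
      apply div_nonneg (by linarith) (le_of_lt hq)
    nlinarith [sq_nonneg (∑ k, x k * v k), mul_nonneg ha (sq_nonneg (∑ k, x k * v k))]

lemma exists_sigma (n m : ℕ) (B : Matrix (Fin n) (Fin m) ℝ) :
    ∃ σ : ℝ, 0 < σ ∧ ∀ (s z : Fin m → Fin 3 → ℝ),
      (∀ e k, s e k * z e k = |z e k|) →
      (∃ e k, z e k ≠ 0) →
      (∀ p : Fin m → Fin 3 → ℝ, (∀ i k, ∑ e, B i e * p e k = 0) →
        (∑ e, ∑ k, p e k * z e k) = 0) →
      σ ≤ ∑ i, ∑ k, (∑ e, B i e * s e k)^2 := by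
  classical
  set E := EuclideanSpace ℝ (Fin m × Fin 3) with hE
  set F := EuclideanSpace ℝ (Fin n × Fin 3) with hF
  set L : E →ₗ[ℝ] F :=
    { toFun := fun p => (WithLp.equiv 2 _).symm (fun q => ∑ e, B q.1 e * p (e, q.2))
      map_add' := fun p r => by
        refine PiLp.ext fun q => ?_
        show ∑ e, B q.1 e * (p (e, q.2) + r (e, q.2))
          = (∑ e, B q.1 e * p (e, q.2)) + ∑ e, B q.1 e * r (e, q.2)
        rw [← Finset.sum_add_distrib]
        exact Finset.sum_congr rfl fun e _ => by ring
      map_smul' := fun c p => by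
        refine PiLp.ext fun q => ?_
        show ∑ e, B q.1 e * (c * p (e, q.2)) = c * ∑ e, B q.1 e * p (e, q.2)
        rw [Finset.mul_sum]
        exact Finset.sum_congr rfl fun e _ => by ring } with hL
  have hLapp : ∀ (p : E) (q : Fin n × Fin 3), L p q = ∑ e, B q.1 e * p (e, q.2) :=
    fun p q => rfl
  set Ker := LinearMap.ker L with hKer
  have hinj : Function.Injective (L.domRestrict Kerᗮ) := by
    rw [← LinearMap.ker_eq_bot, Submodule.eq_bot_iff]
    rintro v hv
    have h1 : (v : E) ∈ Ker := by
      have h2 := LinearMap.mem_ker.mp hv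
      rw [LinearMap.domRestrict_apply] at h2
      exact LinearMap.mem_ker.mpr h2
    have := Submodule.inner_right_of_mem_orthogonal h1 v.2
    have hv0 : (v : E) = 0 := by
      rwa [real_inner_self_eq_norm_sq, pow_eq_zero_iff (by norm_num), norm_eq_zero] at this
    exact Subtype.ext hv0
  obtain ⟨Kc, hKc⟩ : ∃ K : ℝ≥0, AntilipschitzWith K
      (⇑(LinearEquiv.ofInjective (L.domRestrict Kerᗮ) hinj).toContinuousLinearEquiv) :=
    ⟨_, (LinearEquiv.ofInjective (L.domRestrict Kerᗮ) hinj).toContinuousLinearEquiv.antilipschitz⟩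
  set ceqv := (LinearEquiv.ofInjective (L.domRestrict Kerᗮ) hinj).toContinuousLinearEquiv with hceqv
  have hσ0 : ∀ v : Kerᗮ, ((Kc:ℝ) + 1)⁻¹ * ‖(v : E)‖ ≤ ‖L v‖ := by
    intro v
    have h1 : ‖v‖ ≤ (Kc:ℝ) * ‖ceqv v‖ := hKc.le_mul_norm (map_zero _) v
    have h2 : ‖ceqv v‖ = ‖L v‖ := by
      have : ((ceqv v : LinearMap.range (L.domRestrict Kerᗮ)) : F) = L.domRestrict Kerᗮ v := by
        rw [hceqv]
        rw [show (ceqv v : LinearMap.range (L.domRestrict Kerᗮ))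
          = (LinearEquiv.ofInjective (L.domRestrict Kerᗮ) hinj) v from by
            rw [hceqv]; rfl]
        exact LinearEquiv.ofInjective_apply _ v
      rw [show ‖ceqv v‖ = ‖((ceqv v : LinearMap.range (L.domRestrict Kerᗮ)) : F)‖ from rfl, this,
        LinearMap.domRestrict_apply]
    rw [h2] at h1
    have hKpos : (0:ℝ) < (Kc:ℝ) + 1 := by positivity
    have hvn : (0:ℝ) ≤ ‖v‖ := norm_nonneg _
    have hLn : (0:ℝ) ≤ ‖L v‖ := norm_nonneg _
    rw [inv_mul_le_iff₀ hKpos]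
    calc ‖(v:E)‖ = ‖v‖ := rfl
      _ ≤ (Kc:ℝ) * ‖L ↑v‖ := h1
      _ ≤ ((Kc:ℝ) + 1) * ‖L ↑v‖ := by nlinarith
  set σ0 : ℝ := ((Kc:ℝ) + 1)⁻¹ with hσ0def
  have hσ0pos : 0 < σ0 := by positivity
  refine ⟨σ0^2, by positivity, fun s z hsz hznz horth => ?_⟩
  set sE : E := (WithLp.equiv 2 _).symm (fun p => s p.1 p.2) with hsE
  set zE : E := (WithLp.equiv 2 _).symm (fun p => z p.1 p.2) with hzE
  have hsEapp : ∀ p : Fin m × Fin 3, sE p = s p.1 p.2 := fun p => rfl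
  have hzEapp : ∀ p : Fin m × Fin 3, zE p = z p.1 p.2 := fun p => rfl
  set N1 : ℝ := ∑ e, ∑ k, |z e k| with hN1
  have hN1pos : 0 < N1 := by
    obtain ⟨e, k, hek⟩ := hznz
    have h1 : 0 < |z e k| := abs_pos.mpr hek
    have h2 : |z e k| ≤ ∑ k', |z e k'| :=
      Finset.single_le_sum (f := fun k' => |z e k'|) (fun k' _ => abs_nonneg _)
        (Finset.mem_univ k)
    have h3 : ∑ k', |z e k'| ≤ N1 :=
      Finset.single_le_sum (f := fun e' => ∑ k', |z e' k'|)
        (fun e' _ => Finset.sum_nonneg fun k' _ => abs_nonneg _) (Finset.mem_univ e)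
    linarith
  have hzorth : zE ∈ Kerᗮ := by
    rw [Submodule.mem_orthogonal]
    intro u hu
    have hu0 : ∀ i k, ∑ e, B i e * u (e, k) = 0 := by
      intro i k
      have h1 : L u = 0 := LinearMap.mem_ker.mp hu
      have h2 : L u (i, k) = 0 := by rw [h1]; rfl
      rw [hLapp] at h2
      exact h2
    have h3 := horth (fun e k => u (e, k)) hu0
    rw [PiLp.inner_apply]
    simp only [RCLike.inner_apply, conj_trivial]
    rw [Fintype.sum_prod_type]
    rw [← h3]
    exact Finset.sum_congr rfl fun e _ => Finset.sum_congr rfl fun k _ => by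
      rw [hzEapp]; dsimp only; ring
  have hinner : (inner ℝ sE zE : ℝ) = N1 := by
    rw [PiLp.inner_apply]
    simp only [RCLike.inner_apply, conj_trivial]
    rw [Fintype.sum_prod_type, hN1]
    exact Finset.sum_congr rfl fun e _ => Finset.sum_congr rfl fun k _ => by
      rw [hsEapp, hzEapp]; dsimp only; rw [← hsz e k]; ring
  have hzEnorm : ‖zE‖ ≤ N1 := by
    rw [show ‖zE‖ = Real.sqrt (∑ p, ‖zE p‖^2) from EuclideanSpace.norm_eq zE]
    rw [show N1 = Real.sqrt (N1^2) from (Real.sqrt_sq (le_of_lt hN1pos)).symm]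
    apply Real.sqrt_le_sqrt
    have h1 : ∑ p : Fin m × Fin 3, ‖zE p‖^2 ≤ (∑ p : Fin m × Fin 3, ‖zE p‖)^2 :=
      Finset.sum_sq_le_sq_sum_of_nonneg fun p _ => norm_nonneg _
    have h2 : ∑ p : Fin m × Fin 3, ‖zE p‖ = N1 := by
      rw [Fintype.sum_prod_type, hN1]
      exact Finset.sum_congr rfl fun e _ => Finset.sum_congr rfl fun k _ => by
        rw [hzEapp]; exact Real.norm_eq_abs _
    rw [h2] at h1
    exact h1
  obtain ⟨u, hu, w, hw, hdecomp⟩ := Submodule.exists_add_mem_mem_orthogonal (K := Ker) sE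
  have hLsw : L sE = L w := by
    rw [hdecomp, map_add, LinearMap.mem_ker.mp hu, zero_add]
  have hiuz : (inner ℝ u zE : ℝ) = 0 := Submodule.inner_right_of_mem_orthogonal hu hzorth
  have hinner2 : (inner ℝ w zE : ℝ) = N1 := by
    have : (inner ℝ sE zE : ℝ) = inner ℝ u zE + inner ℝ w zE := by
      rw [hdecomp, inner_add_left]
    rw [hinner, hiuz, zero_add] at this
    exact this.symm
  have hw1 : 1 ≤ ‖w‖ := by
    have h1 : (inner ℝ w zE : ℝ) ≤ ‖w‖ * ‖zE‖ := real_inner_le_norm w zE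
    rw [hinner2] at h1
    have h2 : ‖w‖ * ‖zE‖ ≤ ‖w‖ * N1 :=
      mul_le_mul_of_nonneg_left hzEnorm (norm_nonneg _)
    nlinarith
  have hfinal : σ0 ≤ ‖L sE‖ := by
    have h1 := hσ0 ⟨w, hw⟩
    calc σ0 = σ0 * 1 := by ring
      _ ≤ σ0 * ‖w‖ := mul_le_mul_of_nonneg_left hw1 (le_of_lt hσ0pos)
      _ ≤ ‖L w‖ := h1
      _ = ‖L sE‖ := by rw [hLsw]
  have hsum : ∑ i, ∑ k, (∑ e, B i e * s e k)^2 = ‖L sE‖^2 := by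
    rw [show ‖L sE‖ = Real.sqrt (∑ q, ‖L sE q‖^2) from EuclideanSpace.norm_eq _,
      Real.sq_sqrt (Finset.sum_nonneg fun q _ => sq_nonneg _)]
    rw [Fintype.sum_prod_type]
    refine Finset.sum_congr rfl fun i _ => Finset.sum_congr rfl fun k _ => ?_
    rw [hLapp, Real.norm_eq_abs, sq_abs]
    rfl
  rw [hsum]
  have := pow_le_pow_left₀ (le_of_lt hσ0pos) hfinal 2
  exact this

lemma key_ftc_on {f : ℝ → ℝ} {K a b c : ℝ} (hK0 : 0 ≤ K) (ha : 0 ≤ a) (hab : a ≤ b)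
    (hK : ∀ u v, u ∈ Set.Icc 0 (b+1) → v ∈ Set.Icc 0 (b+1) → |f u - f v| ≤ K * |u - v|)
    (hd : ∀ᵐ t ∂(volume : Measure ℝ), t ∈ Set.Ioo a b → ∃ d, HasDerivAt f d t ∧ d ≤ c) :
    f b - f a ≤ c * (b - a) := by
  set T : ℝ := b + 1 with hT
  have hT0 : 0 ≤ T := by linarith
  set cl : ℝ → ℝ := fun u => max 0 (min T u) with hcl
  have hclmem : ∀ u, cl u ∈ Set.Icc 0 T := fun u =>
    ⟨le_max_left _ _, max_le hT0 (min_le_left _ _)⟩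
  have hclid : ∀ u ∈ Set.Icc 0 T, cl u = u := by
    rintro u ⟨h1, h2⟩
    rw [hcl]
    simp only
    rw [min_eq_right h2, max_eq_right h1]
  have hcllip : ∀ u v, |cl u - cl v| ≤ |u - v| := by
    intro u v
    have h1 := le_abs_self (u - v)
    have h2 := neg_abs_le (u - v)
    rw [hcl]
    simp only
    rcases le_total T u with hu | hu <;> rcases le_total T v with hv | hv <;>
      rw [abs_sub_le_iff] <;> constructor <;>
      simp [min_eq_left, min_eq_right, hu, hv, max_def] <;> split_ifs <;> linarith
  set g : ℝ → ℝ := fun u => f (cl u) with hg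
  have hglip : ∀ u v, |g u - g v| ≤ K * |u - v| := by
    intro u v
    calc |g u - g v| = |f (cl u) - f (cl v)| := rfl
      _ ≤ K * |cl u - cl v| := hK _ _ (hclmem u) (hclmem v)
      _ ≤ K * |u - v| := mul_le_mul_of_nonneg_left (hcllip u v) hK0
  have hgd : ∀ᵐ t ∂(volume : Measure ℝ), t ∈ Set.Ioo a b → ∃ d, HasDerivAt g d t ∧ d ≤ c := by
    filter_upwards [hd] with t ht htab
    obtain ⟨d, hdf, hdc⟩ := ht htab
    refine ⟨d, ?_, hdc⟩
    have hmem : Set.Ioo (0:ℝ) T ∈ 𝓝 t :=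
      isOpen_Ioo.mem_nhds ⟨lt_of_le_of_lt ha htab.1, by linarith [htab.2]⟩
    have hev : g =ᶠ[𝓝 t] f := by
      filter_upwards [hmem] with u hu
      rw [hg]
      simp only
      rw [hclid u ⟨le_of_lt hu.1, le_of_lt hu.2⟩]
    exact (Filter.EventuallyEq.hasDerivAt_iff hev).mpr hdf
  have := key_ftc hK0 hglip hab hgd
  rwa [show g b = f b from by rw [hg]; simp only; rw [hclid b ⟨by linarith, by linarith⟩],
    show g a = f a from by rw [hg]; simp only; rw [hclid a ⟨ha, by linarith⟩]] at this

lemma triple_swap {n m : ℕ} (B : Matrix (Fin n) (Fin m) ℝ)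
    (f : Fin n → Fin 3 → ℝ) (g : Fin m → Fin 3 → ℝ) :
    ∑ i, ∑ k, f i k * (∑ e, B i e * g e k) = ∑ e, ∑ k, g e k * (∑ i, B i e * f i k) := by
  calc ∑ i, ∑ k, f i k * (∑ e, B i e * g e k)
      = ∑ i, ∑ k, ∑ e, f i k * (B i e * g e k) := by
        refine Finset.sum_congr rfl fun i _ => Finset.sum_congr rfl fun k _ => ?_
        rw [Finset.mul_sum]
    _ = ∑ i, ∑ e, ∑ k, f i k * (B i e * g e k) :=
        Finset.sum_congr rfl fun i _ => Finset.sum_comm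
    _ = ∑ e, ∑ i, ∑ k, f i k * (B i e * g e k) := Finset.sum_comm
    _ = ∑ e, ∑ k, ∑ i, f i k * (B i e * g e k) :=
        Finset.sum_congr rfl fun e _ => Finset.sum_comm
    _ = ∑ e, ∑ k, g e k * (∑ i, B i e * f i k) := by
        refine Finset.sum_congr rfl fun e _ => Finset.sum_congr rfl fun k _ => ?_
        rw [Finset.mul_sum]
        exact Finset.sum_congr rfl fun i _ => by ring

lemma signsel_mul {s w : ℝ} (h : w ≠ 0 → s = Real.sign w) : s * w = |w| := by
  by_cases hw : w = 0
  · rw [hw, mul_zero, abs_zero]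
  · rw [h hw]
    rcases lt_trichotomy w 0 with h1 | h1 | h1
    · rw [Real.sign_of_neg h1, abs_of_neg h1]; ring
    · exact absurd h1 hw
    · rw [Real.sign_of_pos h1, abs_of_pos h1]; ring

lemma edge_sum {n m : ℕ} (te he : Fin m → Fin n) (hloop : ∀ e, te e ≠ he e)
    (B : Matrix (Fin n) (Fin m) ℝ)
    (hB : ∀ i e, B i e = if i = te e then 1 else if i = he e then -1 else 0)
    (w : Fin n → ℝ) (e : Fin m) :
    ∑ i, B i e * w i = w (te e) - w (he e) := by
  have hterm : ∀ i, B i e * w i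
      = (if i = te e then w i else 0) + (if i = he e then -w i else 0) := by
    intro i
    rw [hB i e]
    by_cases h1 : i = te e
    · have h2 : i ≠ he e := by rw [h1]; exact hloop e
      rw [if_pos h1, if_pos h1, if_neg h2]
      ring
    · by_cases h2 : i = he e
      · rw [if_neg h1, if_pos h2, if_neg h1, if_pos h2]; ring
      · rw [if_neg h1, if_neg h2, if_neg h1, if_neg h2]; ring
  rw [Finset.sum_congr rfl fun i _ => hterm i, Finset.sum_add_distrib,
    Finset.sum_ite_eq' Finset.univ (te e) w, Finset.sum_ite_eq' Finset.univ (he e) (fun i => -w i)]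
  simp
  ring

lemma consensus_of_edges {n m : ℕ} {te he : Fin m → Fin n}
    (hconn : (SimpleGraph.fromRel (fun i j => ∃ e, te e = i ∧ he e = j)).Connected)
    (w : Fin n → Fin 3 → ℝ) (hz : ∀ e, w (te e) = w (he e)) : ∀ i j, w i = w j := by
  intro i j
  obtain ⟨p⟩ := hconn.preconnected i j
  induction p with
  | nil => rfl
  | @cons a c d hadj p ih =>
    have hac : w a = w c := by
      rw [SimpleGraph.fromRel_adj] at hadj
      obtain ⟨-, h | h⟩ := hadj
      · obtain ⟨e, he1, he2⟩ := h
        rw [← he1, ← he2]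
        exact hz e
      · obtain ⟨e, he1, he2⟩ := h
        rw [← he1, ← he2]
        exact (hz e).symm
    rw [hac, ih]


open MeasureTheory in
/-- main theorem, finite-time attitude synchronization.  If the
graph is connected and ∑ᵢ ‖xᵢ(0)‖² < π², then ‖xᵢ(t)‖ < π for all t ≥ 0 and
consensus x₁(t) = ⋯ = xₙ(t) is reached in finite time. -/
theorem finite_time_attitude_synchronization {n m : ℕ}
    (te he : Fin m → Fin n) (hloop : ∀ e, te e ≠ he e)
    (hconn : (SimpleGraph.fromRel (fun i j => ∃ e, te e = i ∧ he e = j)).Connected)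
    (B : Matrix (Fin n) (Fin m) ℝ)
    (hB : ∀ i e, B i e = if i = te e then 1 else if i = he e then -1 else 0)
    (x : ℝ → Fin n → Fin 3 → ℝ)
    (hlip : ∀ a b : ℝ, 0 ≤ a → ∃ K : NNReal, LipschitzOnWith K x (Set.Icc a b))
    (h0 : ∑ i, norm2 (x 0 i) ^ 2 < Real.pi ^ 2)
    (hdyn : ∀ᵐ t ∂(volume : Measure ℝ), 0 ≤ t →
      ∃ s : Fin m → Fin 3 → ℝ,
        SignSelV s (fun e k => ∑ i, B i e * x t i k) ∧
        HasDerivAt x (fun i => -(Lmat (x t i)).mulVec (∑ e, B i e • s e)) t) :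
    (∀ t ≥ (0 : ℝ), ∀ i, norm2 (x t i) < Real.pi) ∧
    ∃ tstar : ℝ, 0 ≤ tstar ∧ ∀ t ≥ tstar, ∀ i j, x t i = x t j := by
  classical
  obtain ⟨σ, hσpos, hσ⟩ := exists_sigma n m B
  set zf : ℝ → Fin m → Fin 3 → ℝ := fun t e k => ∑ i, B i e * x t i k with hzf
  set Wf : ℝ → ℝ := fun t => ∑ i, ∑ k, x t i k ^ 2 with hWf
  set Vf : ℝ → ℝ := fun t => ∑ e, ∑ k, |zf t e k| with hVf
  have hWnn : ∀ t, 0 ≤ Wf t := fun t =>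
    Finset.sum_nonneg fun i _ => Finset.sum_nonneg fun k _ => sq_nonneg _
  have hVnn : ∀ t, 0 ≤ Vf t := fun t =>
    Finset.sum_nonneg fun e _ => Finset.sum_nonneg fun k _ => abs_nonneg _
  have hnorm2sq : ∀ p : Fin 3 → ℝ, norm2 p ^ 2 = ∑ k, p k ^ 2 := fun p => by
    rw [norm2, Real.sq_sqrt (Finset.sum_nonneg fun k _ => sq_nonneg _)]
  have hW0 : Wf 0 < Real.pi ^ 2 := by
    calc Wf 0 = ∑ i, norm2 (x 0 i) ^ 2 :=
          Finset.sum_congr rfl fun i _ => (hnorm2sq (x 0 i)).symm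
      _ < Real.pi ^ 2 := h0
  -- componentwise Lipschitz bounds on windows
  have hxcomp : ∀ T : ℝ, 0 ≤ T → ∃ K : ℝ, 0 ≤ K ∧ ∀ u v, u ∈ Set.Icc (0:ℝ) T →
      v ∈ Set.Icc (0:ℝ) T → ∀ i k, |x u i k - x v i k| ≤ K * |u - v| := by
    intro T hT
    obtain ⟨K, hK⟩ := hlip 0 T le_rfl
    refine ⟨(K : ℝ), K.coe_nonneg, fun u v hu hv i k => ?_⟩
    have h1 : dist (x u) (x v) ≤ (K : ℝ) * dist u v := hK.dist_le_mul u hu v hv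
    have h2 : dist (x u i) (x v i) ≤ dist (x u) (x v) := dist_le_pi_dist (x u) (x v) i
    have h3 : dist (x u i k) (x v i k) ≤ dist (x u i) (x v i) := dist_le_pi_dist _ _ k
    rw [Real.dist_eq] at h1 h3
    calc |x u i k - x v i k| ≤ dist (x u i) (x v i) := h3
      _ ≤ dist (x u) (x v) := h2
      _ ≤ (K:ℝ) * |u - v| := h1
  -- sign-selection product identity
  have hszgen : ∀ (t : ℝ) (s : Fin m → Fin 3 → ℝ),
      SignSelV s (fun e k => ∑ i, B i e * x t i k) →
      ∀ e k, s e k * zf t e k = |zf t e k| := by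
    intro t s hS e k
    exact signsel_mul (fun h => (hS e k).2 h)
  -- a.e. derivative of W
  have hWae : ∀ᵐ t ∂(volume : Measure ℝ), 0 < t → ∃ d, HasDerivAt Wf d t ∧ d ≤ 0 := by
    filter_upwards [hdyn] with t hdt ht0
    obtain ⟨s, hS, hxD⟩ := hdt (le_of_lt ht0)
    set D : Fin n → Fin 3 → ℝ := fun i => -(Lmat (x t i)).mulVec (∑ e, B i e • s e) with hD
    have hcoord : ∀ i k, HasDerivAt (fun u => x u i k) (D i k) t := fun i k =>
      hasDerivAt_pi.mp (hasDerivAt_pi.mp hxD i) k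
    refine ⟨∑ i, ∑ k, ((2:ℕ):ℝ) * x t i k ^ (2-1) * D i k, ?_, ?_⟩
    · apply HasDerivAt.fun_sum
      intro i _
      apply HasDerivAt.fun_sum
      intro k _
      exact (hcoord i k).pow 2
    · have hvv : ∀ i, (∑ e, B i e • s e) = fun k => ∑ e, B i e * s e k := by
        intro i
        funext k
        rw [Finset.sum_apply]
        rfl
      have e1 : ∑ i, ∑ k, ((2:ℕ):ℝ) * x t i k ^ (2-1) * D i k
          = -2 * ∑ i, ∑ k, x t i k * ((Lmat (x t i)).mulVec (∑ e, B i e • s e) k) := by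
        rw [Finset.mul_sum]
        refine Finset.sum_congr rfl fun i _ => ?_
        rw [Finset.mul_sum]
        refine Finset.sum_congr rfl fun k _ => ?_
        rw [hD]
        simp only [Pi.neg_apply]
        ring
      have e2 : ∀ i, ∑ k, x t i k * ((Lmat (x t i)).mulVec (∑ e, B i e • s e) k)
          = ∑ k, x t i k * (∑ e, B i e * s e k) := by
        intro i
        rw [show (∑ k, x t i k * ((Lmat (x t i)).mulVec (∑ e, B i e • s e) k))
            = ∑ k, x t i k * (∑ e, B i e • s e) k from dot_Lmat (x t i) _]
        refine Finset.sum_congr rfl fun k _ => ?_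
        rw [hvv i]
      have e3 := triple_swap B (x t) s
      have e4 : ∑ e, ∑ k, s e k * (∑ i, B i e * x t i k) = Vf t :=
        Finset.sum_congr rfl fun e _ => Finset.sum_congr rfl fun k _ => hszgen t s hS e k
      rw [e1, Finset.sum_congr rfl fun i (_ : i ∈ Finset.univ) => e2 i, e3, e4]
      have := hVnn t
      linarith
  -- W is nonincreasing on [0, ∞)
  have hWmono : ∀ a b : ℝ, 0 ≤ a → a ≤ b → Wf b ≤ Wf a := by
    intro a b ha hab
    obtain ⟨K, hK0, hK⟩ := hxcomp (b+1) (by linarith)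
    have hWlip : ∀ u v, u ∈ Set.Icc (0:ℝ) (b+1) → v ∈ Set.Icc (0:ℝ) (b+1) →
        |Wf u - Wf v| ≤ (∑ i : Fin n, ∑ k : Fin 3, 2 * (|x 0 i k| + K * (b+1)) * K) * |u - v| := by
      intro u v hu hv
      have hb : ∀ (w : ℝ), w ∈ Set.Icc (0:ℝ) (b+1) → ∀ i k, |x w i k| ≤ |x 0 i k| + K * (b+1) := by
        intro w hw i k
        have h1 := hK w 0 hw (Set.mem_Icc.mpr ⟨le_rfl, by linarith⟩) i k
        rw [sub_zero] at h1
        have h2 : |w| ≤ b + 1 := by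
          rw [abs_of_nonneg hw.1]
          exact hw.2
        have h3 := abs_sub_abs_le_abs_sub (x w i k) (x 0 i k)
        nlinarith [abs_nonneg (x w i k - x 0 i k)]
      have hmain := sum2_lip (fun i k => x u i k ^ 2) (fun i k => x v i k ^ 2)
        (fun i k => 2 * (|x 0 i k| + K * (b+1)) * K * |u - v|) ?_
      · calc |Wf u - Wf v| ≤ ∑ i, ∑ k, 2 * (|x 0 i k| + K * (b+1)) * K * |u - v| := hmain
          _ = (∑ i : Fin n, ∑ k : Fin 3, 2 * (|x 0 i k| + K * (b+1)) * K) * |u - v| := by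
            rw [Finset.sum_mul]
            refine Finset.sum_congr rfl fun i _ => ?_
            rw [Finset.sum_mul]
      · intro i k
        have h1 : x u i k ^ 2 - x v i k ^ 2 = (x u i k - x v i k) * (x u i k + x v i k) := by ring
        rw [h1, abs_mul]
        have h2 := hK u v hu hv i k
        have h3 := hb u hu i k
        have h4 := hb v hv i k
        have h5 : |x u i k + x v i k| ≤ |x u i k| + |x v i k| := abs_add_le _ _
        have h7 : (0:ℝ) ≤ |u - v| := abs_nonneg _
        have h8 : |x u i k + x v i k| ≤ 2 * (|x 0 i k| + K * (b+1)) := by linarith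
        have h9 : (0:ℝ) ≤ K * |u - v| := mul_nonneg hK0 h7
        calc |x u i k - x v i k| * |x u i k + x v i k|
            ≤ (K * |u - v|) * (2 * (|x 0 i k| + K * (b+1))) :=
              mul_le_mul h2 h8 (abs_nonneg _) h9
          _ = 2 * (|x 0 i k| + K * (b+1)) * K * |u - v| := by ring
    have hKW : (0:ℝ) ≤ ∑ i : Fin n, ∑ k : Fin 3, 2 * (|x 0 i k| + K * (b+1)) * K := by
      refine Finset.sum_nonneg fun i _ => Finset.sum_nonneg fun k _ => ?_
      have h1 := abs_nonneg (x 0 i k)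
      have h2 : (0:ℝ) ≤ K * (b+1) := mul_nonneg hK0 (by linarith)
      nlinarith
    have hd : ∀ᵐ t ∂(volume : Measure ℝ), t ∈ Set.Ioo a b → ∃ d, HasDerivAt Wf d t ∧ d ≤ 0 := by
      filter_upwards [hWae] with t ht htab
      exact ht (lt_of_le_of_lt ha htab.1)
    have := key_ftc_on hKW ha hab hWlip hd
    linarith
  -- boundedness of trajectories
  set ρ : ℝ := Real.sqrt (Wf 0) with hρ
  have hρ0 : 0 ≤ ρ := Real.sqrt_nonneg _
  have hρπ : ρ < Real.pi := by
    rw [hρ]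
    rw [show Real.pi = Real.sqrt (Real.pi ^ 2) from (Real.sqrt_sq (le_of_lt Real.pi_pos)).symm]
    exact Real.sqrt_lt_sqrt (hWnn 0) hW0
  have hbound : ∀ t : ℝ, 0 ≤ t → ∀ i, norm2 (x t i) ≤ ρ := by
    intro t ht i
    have h2 : ∑ k, x t i k ^ 2 ≤ Wf t :=
      Finset.single_le_sum (f := fun i' => ∑ k, x t i' k ^ 2)
        (fun i' _ => Finset.sum_nonneg fun k _ => sq_nonneg _) (Finset.mem_univ i)
    have h3 : Wf t ≤ Wf 0 := hWmono 0 t le_rfl ht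
    rw [norm2, hρ]
    exact Real.sqrt_le_sqrt (by linarith)
  have hμpos : 0 < Real.cos (ρ/2) :=
    Real.cos_pos_of_mem_Ioo ⟨by linarith [Real.pi_pos], by linarith⟩
  -- a.e. derivative of V
  have hacc : ∀ᵐ t : ℝ ∂(volume : Measure ℝ), ∀ e k, zf t e k = 0 →
      AccPt t (Filter.principal {u : ℝ | zf u e k = 0}) := by
    rw [MeasureTheory.ae_all_iff]
    intro e
    rw [MeasureTheory.ae_all_iff]
    intro k
    have hcnt := countable_nonacc {u : ℝ | zf u e k = 0}
    have hnull := Set.Countable.measure_zero hcnt volume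
    filter_upwards [measure_eq_zero_iff_ae_notMem.mp hnull] with t ht hz
    by_contra hna
    exact ht ⟨hz, hna⟩
  have hVae : ∀ᵐ t ∂(volume : Measure ℝ), 0 < t → ∃ d, HasDerivAt Vf d t ∧ d ≤ 0 ∧
      ((∃ e k, zf t e k ≠ 0) → d ≤ -(Real.cos (ρ/2) * σ)) := by
    filter_upwards [hdyn, hacc] with t hdt hacct ht0
    obtain ⟨s, hS, hxD⟩ := hdt (le_of_lt ht0)
    set D : Fin n → Fin 3 → ℝ := fun i => -(Lmat (x t i)).mulVec (∑ e, B i e • s e) with hD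
    have hcoord : ∀ i k, HasDerivAt (fun u => x u i k) (D i k) t := fun i k =>
      hasDerivAt_pi.mp (hasDerivAt_pi.mp hxD i) k
    have hvv : ∀ i, (∑ e, B i e • s e) = fun k => ∑ e, B i e * s e k := by
      intro i
      funext k
      rw [Finset.sum_apply]
      rfl
    have hzder : ∀ e k, HasDerivAt (fun u => zf u e k) (∑ i, B i e * D i k) t := by
      intro e k
      have h1 : HasDerivAt (fun u => ∑ i, B i e * x u i k) (∑ i, B i e * D i k) t := by
        apply HasDerivAt.fun_sum
        intro i _
        exact (hcoord i k).const_mul (B i e)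
      exact h1
    have hdz0 : ∀ e k, zf t e k = 0 → (∑ i, B i e * D i k) = 0 := fun e k hz =>
      deriv_eq_zero_of_acc (fun u hu => hu) hz (hacct e k hz) (hzder e k)
    have habs : ∀ e k, HasDerivAt (fun u => |zf u e k|)
        (Real.sign (zf t e k) * (∑ i, B i e * D i k)) t := by
      intro e k
      apply hasDerivAt_abs_comp (hzder e k)
      by_cases hz : zf t e k = 0
      · exact Or.inr (hdz0 e k hz)
      · exact Or.inl hz
    have hVder : HasDerivAt Vf (∑ e, ∑ k, Real.sign (zf t e k) * (∑ i, B i e * D i k)) t := by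
      apply HasDerivAt.fun_sum
      intro e _
      apply HasDerivAt.fun_sum
      intro k _
      exact habs e k
    have hveq : ∑ e, ∑ k, Real.sign (zf t e k) * (∑ i, B i e * D i k)
        = ∑ e, ∑ k, s e k * (∑ i, B i e * D i k) := by
      refine Finset.sum_congr rfl fun e _ => Finset.sum_congr rfl fun k _ => ?_
      by_cases hz : zf t e k = 0
      · rw [hdz0 e k hz, mul_zero, mul_zero]
      · rw [(hS e k).2 hz]
    have hswap : ∑ i, ∑ k, D i k * (∑ e, B i e * s e k)
        = ∑ e, ∑ k, s e k * (∑ i, B i e * D i k) := triple_swap B D s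
    have hDk : ∀ i k, D i k = -((Lmat (x t i)).mulVec (fun k' => ∑ e, B i e * s e k') k) := by
      intro i k
      rw [hD]
      simp only [Pi.neg_apply]
      rw [hvv i]
    have hquad : ∀ i, Real.cos (ρ/2) * ∑ k, (∑ e, B i e * s e k) ^ 2
        ≤ ∑ k, (∑ e, B i e * s e k) * ((Lmat (x t i)).mulVec (fun k' => ∑ e, B i e * s e k') k) :=
      fun i => quad_lower (hbound t (le_of_lt ht0) i) hρπ (fun k => ∑ e, B i e * s e k)
    have hval : ∑ i, ∑ k, D i k * (∑ e, B i e * s e k)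
        = -(∑ i, ∑ k, (∑ e, B i e * s e k)
            * ((Lmat (x t i)).mulVec (fun k' => ∑ e, B i e * s e k') k)) := by
      rw [← Finset.sum_neg_distrib]
      refine Finset.sum_congr rfl fun i _ => ?_
      rw [← Finset.sum_neg_distrib]
      refine Finset.sum_congr rfl fun k _ => ?_
      rw [hDk i k]
      ring
    have hSnn : (0:ℝ) ≤ ∑ i, ∑ k, (∑ e, B i e * s e k) ^ 2 :=
      Finset.sum_nonneg fun i _ => Finset.sum_nonneg fun k _ => sq_nonneg _
    have hsumquad : Real.cos (ρ/2) * (∑ i, ∑ k, (∑ e, B i e * s e k) ^ 2)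
        ≤ ∑ i, ∑ k, (∑ e, B i e * s e k)
            * ((Lmat (x t i)).mulVec (fun k' => ∑ e, B i e * s e k') k) := by
      rw [Finset.mul_sum]
      exact Finset.sum_le_sum fun i _ => hquad i
    refine ⟨∑ e, ∑ k, Real.sign (zf t e k) * (∑ i, B i e * D i k), hVder, ?_, ?_⟩
    · rw [hveq, ← hswap, hval]
      nlinarith
    · intro hex
      have horth : ∀ p : Fin m → Fin 3 → ℝ, (∀ i k, ∑ e, B i e * p e k = 0) →
          ∑ e, ∑ k, p e k * zf t e k = 0 := by
        intro p hp
        have h1 := triple_swap B (x t) p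
        have h2 : ∑ i, ∑ k, x t i k * (∑ e, B i e * p e k) = 0 :=
          Finset.sum_eq_zero fun i _ => Finset.sum_eq_zero fun k _ => by
            rw [hp i k, mul_zero]
        rw [h2] at h1
        exact h1.symm
      have hσs := hσ s (zf t) (hszgen t s hS) hex horth
      rw [hveq, ← hswap, hval]
      nlinarith
  -- V is nonincreasing and decreasing at uniform rate
  have hVwin : ∀ b : ℝ, 0 ≤ b → ∃ KV : ℝ, 0 ≤ KV ∧ ∀ u v, u ∈ Set.Icc (0:ℝ) (b+1) →
      v ∈ Set.Icc (0:ℝ) (b+1) → |Vf u - Vf v| ≤ KV * |u - v| := by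
    intro b hb
    obtain ⟨K, hK0, hK⟩ := hxcomp (b+1) (by linarith)
    refine ⟨∑ e : Fin m, ∑ k : Fin 3, (∑ i, |B i e|) * K, ?_, ?_⟩
    · refine Finset.sum_nonneg fun e _ => Finset.sum_nonneg fun k _ => ?_
      exact mul_nonneg (Finset.sum_nonneg fun i _ => abs_nonneg _) hK0
    · intro u v hu hv
      have hmain := sum2_lip (fun e k => |zf u e k|) (fun e k => |zf v e k|)
        (fun e k => (∑ i, |B i e|) * K * |u - v|) ?_
      · calc |Vf u - Vf v| ≤ ∑ e, ∑ k, (∑ i, |B i e|) * K * |u - v| := hmain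
          _ = (∑ e : Fin m, ∑ k : Fin 3, (∑ i, |B i e|) * K) * |u - v| := by
            symm
            rw [Finset.sum_mul]
            exact Finset.sum_congr rfl fun e _ => Finset.sum_mul _ _ _
      · intro e k
        have h1 : |(|zf u e k| - |zf v e k|)| ≤ |zf u e k - zf v e k| :=
          abs_abs_sub_abs_le_abs_sub _ _
        have h2 : zf u e k - zf v e k = ∑ i, B i e * (x u i k - x v i k) := by
          rw [show zf u e k = ∑ i, B i e * x u i k from rfl,
            show zf v e k = ∑ i, B i e * x v i k from rfl, ← Finset.sum_sub_distrib]
          exact Finset.sum_congr rfl fun i _ => by ring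
        have h3 : |∑ i, B i e * (x u i k - x v i k)| ≤ ∑ i, |B i e| * (K * |u - v|) := by
          refine (Finset.abs_sum_le_sum_abs _ _).trans (Finset.sum_le_sum fun i _ => ?_)
          rw [abs_mul]
          exact mul_le_mul_of_nonneg_left (hK u v hu hv i k) (abs_nonneg _)
        have h4 : ∑ i, |B i e| * (K * |u - v|) = (∑ i, |B i e|) * K * |u - v| := by
          rw [Finset.sum_mul, Finset.sum_mul]
          exact Finset.sum_congr rfl fun i _ => by ring
        calc |(|zf u e k| - |zf v e k|)| ≤ |∑ i, B i e * (x u i k - x v i k)| := by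
              rw [← h2]; exact h1
          _ ≤ (∑ i, |B i e|) * K * |u - v| := by rw [← h4]; exact h3
  have hVmono : ∀ a b : ℝ, 0 ≤ a → a ≤ b → Vf b ≤ Vf a := by
    intro a b ha hab
    obtain ⟨KV, hKV0, hKV⟩ := hVwin b (le_trans ha hab)
    have hd : ∀ᵐ t ∂(volume : Measure ℝ), t ∈ Set.Ioo a b → ∃ d, HasDerivAt Vf d t ∧ d ≤ 0 := by
      filter_upwards [hVae] with t ht htab
      obtain ⟨d, h1, h2, -⟩ := ht (lt_of_le_of_lt ha htab.1)
      exact ⟨d, h1, h2⟩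
    have := key_ftc_on hKV0 ha hab hKV hd
    linarith
  have hVpos_ex : ∀ t : ℝ, 0 < Vf t → ∃ e k, zf t e k ≠ 0 := by
    intro t ht
    by_contra hc
    push_neg at hc
    have : Vf t = 0 := by
      rw [hVf]
      exact Finset.sum_eq_zero fun e _ => Finset.sum_eq_zero fun k _ => by
        rw [hc e k, abs_zero]
    linarith
  have hVdec : ∀ b : ℝ, 0 ≤ b → (∀ u ∈ Set.Icc (0:ℝ) b, 0 < Vf u) →
      Vf b - Vf 0 ≤ -(Real.cos (ρ/2) * σ) * b := by
    intro b hb hpos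
    obtain ⟨KV, hKV0, hKV⟩ := hVwin b hb
    have hd : ∀ᵐ t ∂(volume : Measure ℝ), t ∈ Set.Ioo 0 b → ∃ d, HasDerivAt Vf d t ∧
        d ≤ -(Real.cos (ρ/2) * σ) := by
      filter_upwards [hVae] with t ht htab
      obtain ⟨d, h1, -, h3⟩ := ht htab.1
      exact ⟨d, h1, h3 (hVpos_ex t (hpos t ⟨le_of_lt htab.1, le_of_lt htab.2⟩))⟩
    have := key_ftc_on hKV0 le_rfl hb hKV hd
    linarith
  -- conclusion
  constructor
  · intro t ht i
    exact lt_of_le_of_lt (hbound t ht i) hρπ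
  · have hκpos : 0 < Real.cos (ρ/2) * σ := mul_pos hμpos hσpos
    refine ⟨Vf 0 / (Real.cos (ρ/2) * σ), div_nonneg (hVnn 0) (le_of_lt hκpos), ?_⟩
    intro t htstar i j
    have ht0 : (0:ℝ) ≤ t := le_trans (div_nonneg (hVnn 0) (le_of_lt hκpos)) htstar
    have hVt : Vf t = 0 := by
      by_contra hV
      have hVpos : 0 < Vf t := lt_of_le_of_ne (hVnn t) (Ne.symm hV)
      have hall : ∀ u ∈ Set.Icc (0:ℝ) t, 0 < Vf u := fun u hu =>
        lt_of_lt_of_le hVpos (hVmono u t hu.1 hu.2)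
      have hdec := hVdec t ht0 hall
      have h1 : Real.cos (ρ/2) * σ * t ≤ Vf 0 - Vf t := by linarith
      have h2 : t < Vf 0 / (Real.cos (ρ/2) * σ) := by
        rw [lt_div_iff₀ hκpos]
        nlinarith
      linarith
    have hz0 : ∀ e k, zf t e k = 0 := by
      have h1 : ∀ e ∈ Finset.univ, (∑ k, |zf t e k|) = 0 := by
        rw [← Finset.sum_eq_zero_iff_of_nonneg
          (fun e _ => Finset.sum_nonneg fun k _ => abs_nonneg _)]
        exact hVt
      intro e k
      have h2 := h1 e (Finset.mem_univ e)
      have h3 : ∀ k' ∈ Finset.univ, |zf t e k'| = 0 := by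
        rw [← Finset.sum_eq_zero_iff_of_nonneg (fun k' _ => abs_nonneg _)]
        exact h2
      exact abs_eq_zero.mp (h3 k (Finset.mem_univ k))
    have hedge : ∀ e, x t (te e) = x t (he e) := by
      intro e
      funext k
      have h3 := edge_sum te he hloop B hB (fun i' => x t i' k) e
      have h4 : zf t e k = x t (te e) k - x t (he e) k := h3
      have h5 := hz0 e k
      rw [h4] at h5
      linarith
    exact consensus_of_edges hconn (x t) hedge i j
end
end

section
/- Lipschitz continuity of the transition matrix map on balls of radius less than π: for every r < π, the map x ↦ L_x (with L_0 := I₃) is Lipschitz continuous on the closed ball {x ∈ ℝ³ : ‖x‖₂ ≤ r}, i.e., there exists K ≥ 0 such that ‖L_x − L_y‖ ≤ K ‖x − y‖₂ for all x, y with ‖x‖₂ ≤ r and ‖y‖₂ ≤ r. -/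
open Matrix Real

noncomputable section

/-- The Frobenius norm on 3×3 real matrices. -/
def fnorm (M : Matrix (Fin 3) (Fin 3) ℝ) : ℝ := Real.sqrt (∑ i, ∑ j, M i j ^ 2)



namespace TMLaux

open Nat Filter

/-! ### The entire function `S` with `S (θ^2) = sinc θ` -/

def Sco : ℕ → ℝ := fun n => (-1)^n / (2*n+1)!

def Sser : FormalMultilinearSeries ℝ ℝ ℝ := FormalMultilinearSeries.ofScalars ℝ Sco

def S : ℝ → ℝ := Sser.sum

lemma Sco_ne (n : ℕ) : Sco n ≠ 0 := by
  have : ((2*n+1)! : ℝ) ≠ 0 := by positivity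
  simp [Sco, div_ne_zero_iff, this, pow_ne_zero]

lemma ratio_tendsto : Tendsto (fun n => ‖Sco (n+1)‖ / ‖Sco n‖) atTop (nhds 0) := by
  have heq : ∀ n : ℕ, ‖Sco (n+1)‖ / ‖Sco n‖ = 1 / ((2*n+2)*(2*n+3)) := by
    intro n
    have h1 : (2*(n+1)+1)! = (2*n+3) * ((2*n+2) * (2*n+1)!) := by
      have h : 2*(n+1)+1 = (2*n+2)+1 := by ring
      rw [h, Nat.factorial_succ, show (2*n+2) = (2*n+1)+1 from rfl, Nat.factorial_succ]
    have h2 : ((2*n+1)! : ℝ) ≠ 0 := by positivity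
    have hn : ∀ m : ℕ, ‖Sco m‖ = 1/((2*m+1)! : ℝ) := by
      intro m
      rw [Sco, norm_div, norm_pow, norm_neg, norm_one, one_pow, Real.norm_natCast]
    rw [hn, hn, h1]
    push_cast
    field_simp
  rw [funext heq]
  have hle : ∀ n : ℕ, 1 / ((2*(n:ℝ)+2)*(2*n+3)) ≤ 1 / (n+1) := by
    intro n
    apply one_div_le_one_div_of_le (by positivity)
    nlinarith [Nat.cast_nonneg (α := ℝ) n]
  have hge : ∀ n : ℕ, 0 ≤ 1 / ((2*(n:ℝ)+2)*(2*n+3)) := fun n => by positivity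
  exact squeeze_zero hge hle tendsto_one_div_add_atTop_nhds_zero_nat

lemma Sser_radius : Sser.radius = ⊤ :=
  FormalMultilinearSeries.ofScalars_radius_eq_top_of_tendsto ℝ Sco
    (Eventually.of_forall Sco_ne) ratio_tendsto

lemma hball : HasFPowerSeriesOnBall S Sser 0 ⊤ := by
  have := Sser.hasFPowerSeriesOnBall (by rw [Sser_radius]; exact ENNReal.zero_lt_top)
  rwa [Sser_radius] at this

lemma Sanalytic (t : ℝ) : AnalyticAt ℝ S t :=
  hball.analyticOnNhd t (by simp)

lemma ShasSum (t : ℝ) : HasSum (fun n => Sco n * t^n) (S t) := by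
  have := hball.hasSum (y := t) (by simp)
  rw [zero_add] at this
  simpa only [Sser, FormalMultilinearSeries.ofScalars_apply_eq, smul_eq_mul] using this

lemma S_zero : S 0 = 1 := by
  have h2 : HasSum (fun n : ℕ => Sco n * 0^n) (Sco 0 * 0^0) :=
    hasSum_single 0 (fun b hb => by simp [zero_pow hb])
  have := (ShasSum 0).unique h2
  simpa [Sco] using this

lemma S_sq (θ : ℝ) : S (θ^2) = _root_.sinc θ := by
  rcases eq_or_ne θ 0 with h | h
  · simp [h, S_zero, _root_.sinc]
  · have h1 := (ShasSum (θ^2)).mul_left θ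
    have h2 : (fun n : ℕ => θ * (Sco n * (θ^2)^n))
        = fun n : ℕ => (-1)^n * θ^(2*n+1) / ((2*n+1)! : ℝ) := by
      funext n
      rw [Sco, ← pow_mul, pow_succ]
      ring
    rw [h2] at h1
    have h3 := h1.unique (Real.hasSum_sin θ)
    rw [_root_.sinc, if_neg h, eq_div_iff h]
    linarith [h3]

lemma sinc_pos {θ : ℝ} (h0 : 0 ≤ θ) (hπ : θ < π) : 0 < _root_.sinc θ := by
  rcases eq_or_lt_of_le h0 with h | h
  · simp [_root_.sinc, ← h]
  · rw [_root_.sinc, if_neg (ne_of_gt h)]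
    exact div_pos (Real.sin_pos_of_pos_of_lt_pi h hπ) h

/-! ### The analytic function `G` with `G (θ^2) = (1 - cfun θ) * sinc (θ/2)^2 / θ^2` -/

def N : ℝ → ℝ := fun t => S (t/4)^2 - S t

lemma Nanalytic (t : ℝ) : AnalyticAt ℝ N t := by
  have h4 : AnalyticAt ℝ (fun u : ℝ => S (u/4)) t := by
    have hin : AnalyticAt ℝ (fun u : ℝ => u/4) t :=
      analyticAt_id.div analyticAt_const (by norm_num)
    exact AnalyticAt.comp (f := fun u : ℝ => u/4) (x := t) (Sanalytic (t/4)) hin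
  exact (h4.pow 2).sub (Sanalytic t)

lemma N_zero : N 0 = 0 := by simp [N, S_zero]

def G : ℝ → ℝ := dslope N 0

lemma Ganalytic (t : ℝ) : AnalyticAt ℝ G t := by
  rcases eq_or_ne t 0 with h | h
  · obtain ⟨p, hp⟩ := Nanalytic 0
    rw [G, h]
    exact hp.has_fpower_series_dslope_fslope.analyticAt
  · have h1 : AnalyticAt ℝ (fun u : ℝ => (N u - N 0) / (u - 0)) t :=
      ((Nanalytic t).sub analyticAt_const).div (analyticAt_id.sub analyticAt_const)
        (by simpa using h)
    apply h1.congr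
    filter_upwards [eventually_ne_nhds h] with u hu
    rw [G, dslope_of_ne _ hu, slope_def_field]

lemma G_val {t : ℝ} (h : t ≠ 0) : G t = (S (t/4)^2 - S t) / t := by
  rw [G, dslope_of_ne _ h, slope_def_field, N_zero, N]
  ring

/-! ### Basic facts about `q`, `norm2`, `hatm` -/

def q (x : Fin 3 → ℝ) : ℝ := ∑ i, x i ^ 2

lemma q_nonneg (x : Fin 3 → ℝ) : 0 ≤ q x := Finset.sum_nonneg fun i _ => sq_nonneg _

lemma norm2_sq (x : Fin 3 → ℝ) : norm2 x ^ 2 = q x := Real.sq_sqrt (q_nonneg x)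

lemma norm2_nonneg (x : Fin 3 → ℝ) : 0 ≤ norm2 x := Real.sqrt_nonneg _

lemma S_qx (x : Fin 3 → ℝ) : S (q x) = _root_.sinc (norm2 x) := by rw [← norm2_sq, S_sq]

lemma S_qx4 (x : Fin 3 → ℝ) : S (q x / 4) = _root_.sinc (norm2 x / 2) := by
  have : q x / 4 = (norm2 x / 2)^2 := by rw [div_pow, norm2_sq]; norm_num
  rw [this, S_sq]

lemma q_pos {x : Fin 3 → ℝ} (hx : x ≠ 0) : 0 < q x := by
  obtain ⟨i, hi⟩ := Function.ne_iff.mp hx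
  have h1 : x i ^ 2 ≤ q x := Finset.single_le_sum (fun j _ => sq_nonneg (x j)) (Finset.mem_univ i)
  have h2 : (0:ℝ) < x i ^ 2 := (sq_nonneg _).lt_of_ne (Ne.symm (pow_ne_zero 2 hi))
  linarith

lemma norm2_pos {x : Fin 3 → ℝ} (hx : x ≠ 0) : 0 < norm2 x :=
  Real.sqrt_pos.mpr (q_pos hx)

/-- The entry functions of the transition matrix. -/
def Fe (i j : Fin 3) (x : Fin 3 → ℝ) : ℝ :=
  (S (q x) / S (q x / 4) ^ 2) * (1 : Matrix (Fin 3) (Fin 3) ℝ) i j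
    + (G (q x) / S (q x / 4) ^ 2) * (x i * x j) + (1/2) * hatm x i j

lemma hatm_zero (i j : Fin 3) : hatm (0 : Fin 3 → ℝ) i j = 0 := by
  fin_cases i <;> fin_cases j <;> simp [hatm, Matrix.vecHead, Matrix.vecTail]

lemma Fe_eq {x : Fin 3 → ℝ} (hden : S (q x / 4) ≠ 0) (i j : Fin 3) :
    Lmat x i j = Fe i j x := by
  rcases eq_or_ne x 0 with h | h
  · subst h
    have hq0 : q (0 : Fin 3 → ℝ) = 0 := by simp [q]
    simp [Lmat, Fe, hq0, S_zero, hatm_zero]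
  · have hq := q_pos h
    have hn2 := norm2_pos h
    rw [Lmat, if_neg h]
    have hc : cfun (norm2 x) = S (q x) / S (q x / 4) ^ 2 := by
      rw [cfun, S_qx, S_qx4]
    have hg : (1 - cfun (norm2 x)) / norm2 x ^ 2 = G (q x) / S (q x / 4) ^ 2 := by
      have hb : S (q x / 4) ^ 2 ≠ 0 := pow_ne_zero _ hden
      rw [hc, G_val (ne_of_gt hq), norm2_sq, one_sub_div hb, div_div, div_div, mul_comm]
    simp only [Matrix.add_apply, Matrix.smul_apply, smul_eq_mul, vecMulVec_apply, Fe]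
    rw [hg, hc]

/-! ### Smoothness of the entry functions -/

lemma hcoord (k : Fin 3) : ContDiff ℝ 1 (fun x : Fin 3 → ℝ => x k) :=
  contDiff_apply ℝ ℝ k

lemma q_contDiff : ContDiff ℝ 1 q :=
  ContDiff.sum fun i _ => (hcoord i).pow 2

lemma hatm_entry_eq (i j : Fin 3) (x : Fin 3 → ℝ) :
    hatm x i j = x 0 * !![(0:ℝ),0,0;0,0,-1;0,1,0] i j + x 1 * !![(0:ℝ),0,1;0,0,0;-1,0,0] i j
      + x 2 * !![(0:ℝ),-1,0;1,0,0;0,0,0] i j := by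
  fin_cases i <;> fin_cases j <;>
    simp [hatm, Matrix.vecHead, Matrix.vecTail]

lemma hatm_entry_contDiff (i j : Fin 3) : ContDiff ℝ 1 (fun x : Fin 3 → ℝ => hatm x i j) := by
  have : (fun x : Fin 3 → ℝ => hatm x i j) = fun x : Fin 3 → ℝ =>
      x 0 * !![(0:ℝ),0,0;0,0,-1;0,1,0] i j + x 1 * !![(0:ℝ),0,1;0,0,0;-1,0,0] i j
        + x 2 * !![(0:ℝ),-1,0;1,0,0;0,0,0] i j := funext fun x => hatm_entry_eq i j x
  rw [this]
  exact (((hcoord 0).mul contDiff_const).add ((hcoord 1).mul contDiff_const)).add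
    ((hcoord 2).mul contDiff_const)

lemma Fe_contDiffAt (i j : Fin 3) {x : Fin 3 → ℝ} (h : S (q x / 4) ≠ 0) :
    ContDiffAt ℝ 1 (Fe i j) x := by
  have hq1 : ContDiffAt ℝ 1 q x := q_contDiff.contDiffAt
  have hq4 : ContDiffAt ℝ 1 (fun x : Fin 3 → ℝ => q x / 4) x := (q_contDiff.div_const 4).contDiffAt
  have hS : ContDiffAt ℝ 1 (fun x : Fin 3 → ℝ => S (q x)) x :=
    (Sanalytic (q x)).contDiffAt.comp x hq1
  have hS4 : ContDiffAt ℝ 1 (fun x : Fin 3 → ℝ => S (q x / 4)) x :=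
    (Sanalytic (q x / 4)).contDiffAt.comp x hq4
  have hG : ContDiffAt ℝ 1 (fun x : Fin 3 → ℝ => G (q x)) x :=
    (Ganalytic (q x)).contDiffAt.comp x hq1
  have hxi : ∀ k : Fin 3, ContDiffAt ℝ 1 (fun x : Fin 3 → ℝ => x k) x :=
    fun k => (hcoord k).contDiffAt
  exact (((hS.div (hS4.pow 2) (pow_ne_zero 2 h)).mul contDiffAt_const).add
    ((hG.div (hS4.pow 2) (pow_ne_zero 2 h)).mul ((hxi i).mul (hxi j)))).add
    (contDiffAt_const.mul (hatm_entry_contDiff i j).contDiffAt)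

lemma denom_cont : Continuous (fun x : Fin 3 → ℝ => S (q x / 4)) := by
  refine continuous_iff_continuousAt.mpr fun x => ?_
  exact ((Sanalytic (q x / 4)).contDiffAt.comp x
    ((q_contDiff.div_const 4).contDiffAt (n := 1))).continuousAt

lemma abs_le_norm2 (z : Fin 3 → ℝ) (i : Fin 3) : |z i| ≤ norm2 z := by
  rw [← Real.sqrt_sq_eq_abs]
  exact Real.sqrt_le_sqrt
    (Finset.single_le_sum (fun j _ => sq_nonneg (z j)) (Finset.mem_univ i))

/-! ### The main Lipschitz statement -/

theorem main (r : ℝ) (hr : r < Real.pi) :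
    ∃ K : ℝ, 0 ≤ K ∧ ∀ x y : Fin 3 → ℝ, norm2 x ≤ r → norm2 y ≤ r →
      fnorm (Lmat x - Lmat y) ≤ K * norm2 (x - y) := by
  rcases lt_or_ge r 0 with hr0 | hr0
  · refine ⟨0, le_refl 0, fun x y hx hy => absurd hx (not_le.mpr ?_)⟩
    exact lt_of_lt_of_le hr0 (norm2_nonneg x)
  set Sset : Set (Fin 3 → ℝ) := {x | norm2 x ≤ r} with hSset
  have hden : ∀ x ∈ Sset, S (q x / 4) ≠ 0 := by
    intro x hx
    rw [S_qx4]
    have h1 : 0 ≤ norm2 x / 2 := by linarith [norm2_nonneg x]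
    have h2 : norm2 x / 2 < π := by
      have := Real.pi_pos
      have : norm2 x ≤ r := hx
      linarith
    exact ne_of_gt (sinc_pos h1 h2)
  set e : EuclideanSpace ℝ (Fin 3) ≃L[ℝ] (Fin 3 → ℝ) :=
    PiLp.continuousLinearEquiv 2 ℝ (fun _ : Fin 3 => ℝ) with he
  have hnorm : ∀ x : Fin 3 → ℝ, ‖e.symm x‖ = norm2 x := by
    intro x
    rw [EuclideanSpace.norm_eq]
    unfold norm2
    congr 1
    refine Finset.sum_congr rfl fun i _ => ?_
    rw [Real.norm_eq_abs, sq_abs]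
    rfl
  have hconv : Convex ℝ Sset := by
    intro x hx y hy a b ha hb hab
    have h1 : norm2 (a • x + b • y) ≤ a * norm2 x + b * norm2 y := by
      rw [← hnorm, ← hnorm, ← hnorm, map_add, _root_.map_smul, _root_.map_smul]
      calc ‖a • e.symm x + b • e.symm y‖ ≤ ‖a • e.symm x‖ + ‖b • e.symm y‖ := norm_add_le _ _
        _ = a * ‖e.symm x‖ + b * ‖e.symm y‖ := by
            rw [norm_smul, norm_smul, Real.norm_eq_abs, Real.norm_eq_abs,
              abs_of_nonneg ha, abs_of_nonneg hb]
    have hx' : norm2 x ≤ r := hx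
    have hy' : norm2 y ≤ r := hy
    have : a * norm2 x + b * norm2 y ≤ r := by
      calc a * norm2 x + b * norm2 y ≤ a * r + b * r := by
            apply _root_.add_le_add <;> apply mul_le_mul_of_nonneg_left <;> assumption
        _ = r := by rw [← add_mul, hab, one_mul]
    exact le_trans h1 this
  have hclosed : IsClosed Sset := by
    have hcont : Continuous norm2 := by
      unfold norm2
      exact Real.continuous_sqrt.comp (by fun_prop)
    exact IsClosed.preimage hcont isClosed_Iic
  have hbdd : Bornology.IsBounded Sset := by
    apply (Metric.isBounded_closedBall (x := (0 : Fin 3 → ℝ)) (r := r)).subset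
    intro x hx
    rw [Metric.mem_closedBall, _root_.dist_zero_right]
    rw [pi_norm_le_iff_of_nonneg hr0]
    intro i
    exact le_trans (abs_le_norm2 x i) hx
  have hcompact : IsCompact Sset := Metric.isCompact_of_isClosed_isBounded hclosed hbdd
  set U : Set (Fin 3 → ℝ) := {x | S (q x / 4) ≠ 0} with hU
  have hUopen : IsOpen U := isOpen_compl_singleton.preimage denom_cont
  have hsubU : Sset ⊆ U := fun x hx => hden x hx
  have key : ∀ i j : Fin 3, ∃ C : ℝ, 0 ≤ C ∧ ∀ x ∈ Sset, ∀ y ∈ Sset,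
      |Fe i j x - Fe i j y| ≤ C * ‖x - y‖ := by
    intro i j
    have hCD : ContDiffOn ℝ 1 (Fe i j) U := fun x hx => (Fe_contDiffAt i j hx).contDiffWithinAt
    have hfc : ContinuousOn (fun x => fderiv ℝ (Fe i j) x) U :=
      hCD.continuousOn_fderiv_of_isOpen hUopen le_rfl
    obtain ⟨C, hC⟩ := hcompact.exists_bound_of_continuousOn (hfc.mono hsubU)
    refine ⟨max C 0, le_max_right _ _, fun x hx y hy => ?_⟩
    have hlip := Convex.norm_image_sub_le_of_norm_fderiv_le
      (fun z hz => (Fe_contDiffAt i j (hsubU hz)).differentiableAt one_ne_zero)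
      (fun z hz => le_trans (hC z hz) (le_max_left C (0:ℝ))) hconv hy hx
    simpa [Real.norm_eq_abs] using hlip
  choose Cf hCf0 hCf using key
  set K0 : ℝ := ∑ i : Fin 3, ∑ j : Fin 3, Cf i j with hK0def
  have hK0 : 0 ≤ K0 := Finset.sum_nonneg fun i _ => Finset.sum_nonneg fun j _ => hCf0 i j
  have hle : ∀ i j : Fin 3, Cf i j ≤ K0 := by
    intro i j
    calc Cf i j ≤ ∑ j' : Fin 3, Cf i j' :=
          Finset.single_le_sum (fun j' _ => hCf0 i j') (Finset.mem_univ j)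
      _ ≤ K0 := Finset.single_le_sum
          (fun i' _ => Finset.sum_nonneg fun j' _ => hCf0 i' j') (Finset.mem_univ i)
  refine ⟨3 * K0, by positivity, fun x y hx hy => ?_⟩
  have hxS : x ∈ Sset := hx
  have hyS : y ∈ Sset := hy
  have hd : ‖x - y‖ ≤ norm2 (x - y) := by
    rw [pi_norm_le_iff_of_nonneg (norm2_nonneg _)]
    exact fun i => abs_le_norm2 (x - y) i
  set B : ℝ := K0 * norm2 (x - y) with hB
  have hBnn : 0 ≤ B := mul_nonneg hK0 (norm2_nonneg _)
  have hentry : ∀ i j : Fin 3, |(Lmat x - Lmat y) i j| ≤ B := by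
    intro i j
    rw [Matrix.sub_apply, Fe_eq (hden x hxS) i j, Fe_eq (hden y hyS) i j]
    calc |Fe i j x - Fe i j y| ≤ Cf i j * ‖x - y‖ := hCf i j x hxS y hyS
      _ ≤ K0 * norm2 (x - y) :=
        mul_le_mul (hle i j) hd (norm_nonneg _) hK0
  have hsum : ∑ i : Fin 3, ∑ j : Fin 3, (Lmat x - Lmat y) i j ^ 2
      ≤ ∑ i : Fin 3, ∑ j : Fin 3, B ^ 2 := by
    refine Finset.sum_le_sum fun i _ => Finset.sum_le_sum fun j _ => ?_
    have := hentry i j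
    calc (Lmat x - Lmat y) i j ^ 2 = |(Lmat x - Lmat y) i j| ^ 2 := (sq_abs _).symm
      _ ≤ B ^ 2 := pow_le_pow_left₀ (abs_nonneg _) this 2
  have h9 : ∑ i : Fin 3, ∑ j : Fin 3, B ^ 2 = (3 * B) ^ 2 := by
    simp [Finset.sum_const]
    ring
  rw [fnorm]
  calc Real.sqrt (∑ i, ∑ j, (Lmat x - Lmat y) i j ^ 2)
      ≤ Real.sqrt ((3 * B) ^ 2) := by
        rw [← h9]; exact Real.sqrt_le_sqrt hsum
    _ = 3 * B := Real.sqrt_sq (by positivity)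
    _ = 3 * K0 * norm2 (x - y) := by rw [hB]; ring

end TMLaux


/-- x ↦ Lₓ is Lipschitz on closed balls of radius r < π. -/
theorem transition_matrix_lipschitz (r : ℝ) (hr : r < Real.pi) :
    ∃ K : ℝ, 0 ≤ K ∧ ∀ x y : Fin 3 → ℝ, norm2 x ≤ r → norm2 y ≤ r →
      fnorm (Lmat x - Lmat y) ≤ K * norm2 (x - y) :=
  TMLaux.main r hr
end
end
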